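/- Let M and N be symmetric n×n matrices. Then for each i, |λ_i(M+N) - λ_i(M)| ≤ ‖N‖, where λ_i denotes the i-th largest eigenvalue and ‖N‖ the operator norm. -/

import Mathlib

open scoped BigOperators

noncomputable section

def ip {n : ℕ} (x y : Fin n → ℝ) : ℝ := ∑ i, x i * y i

def evnorm {n : ℕ} (x : Fin n → ℝ) : ℝ := Real.sqrt (ip x x)

def toE {n : ℕ} (x : Fin n → ℝ) : EuclideanSpace ℝ (Fin n) := WithLp.toLp 2 x

lemma ip_eq_inner {n : ℕ} (x y : Fin n → ℝ) :
    ip x y = (inner ℝ (toE x) (toE y) : ℝ) := by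
  simp [ip, toE, PiLp.inner_apply, RCLike.inner_apply, mul_comm]

lemma evnorm_eq_norm {n : ℕ} (x : Fin n → ℝ) :
    evnorm x = ‖toE x‖ := by
  rw [EuclideanSpace.norm_eq]
  simp [evnorm, ip, toE, sq, Real.norm_eq_abs, abs_mul_abs_self]

lemma quad {n : ℕ} (v : Fin n → EuclideanSpace ℝ (Fin n)) (hv : Orthonormal ℝ v)
    {ι : Type} [Fintype ι] [DecidableEq ι] (f : ι → Fin n) (hf : Function.Injective f)
    (d e : ι → ℝ) :
    (inner ℝ (∑ j, d j • v (f j)) (∑ j, e j • v (f j)) : ℝ) = ∑ j, d j * e j := by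
  have h := orthonormal_iff_ite.mp (hv.comp f hf)
  simp only [Function.comp_apply] at h
  rw [sum_inner]
  simp_rw [inner_sum, real_inner_smul_left, real_inner_smul_right, h]
  simp [mul_ite, Finset.sum_ite_eq']

theorem weyl_key (n : ℕ) (A B P : Matrix (Fin n) (Fin n) ℝ) (hAB : A = B + P)
    (a b : Fin n → ℝ) (v w : Fin n → EuclideanSpace ℝ (Fin n))
    (hv : Orthonormal ℝ v) (hw : Orthonormal ℝ w)
    (hveig : ∀ j, B.mulVec (v j) = b j • v j)
    (hweig : ∀ j, A.mulVec (w j) = a j • w j)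
    (ha : Antitone a) (hb : Antitone b)
    (c : ℝ)
    (hc : ∀ x : EuclideanSpace ℝ (Fin n), ‖toE (P.mulVec x)‖ ≤ c * ‖x‖)
    (i : Fin n) : a i ≤ b i + c := by
  classical
  set S₁ : Finset (Fin n) := Finset.Iic i with hS₁
  set S₂ : Finset (Fin n) := Finset.Ici i with hS₂
  set s : Submodule ℝ (EuclideanSpace ℝ (Fin n)) :=
    Submodule.span ℝ (Set.range fun j : S₁ => w j) with hs
  set t : Submodule ℝ (EuclideanSpace ℝ (Fin n)) :=
    Submodule.span ℝ (Set.range fun j : S₂ => v j) with ht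
  have hws : LinearIndependent ℝ (fun j : S₁ => w j) :=
    hw.linearIndependent.comp _ Subtype.val_injective
  have hvt : LinearIndependent ℝ (fun j : S₂ => v j) :=
    hv.linearIndependent.comp _ Subtype.val_injective
  have hsrank : Module.finrank ℝ s = (i : ℕ) + 1 := by
    rw [hs, finrank_span_eq_card hws, Fintype.card_coe, hS₁, Fin.card_Iic]
  have htrank : Module.finrank ℝ t = n - (i : ℕ) := by
    rw [ht, finrank_span_eq_card hvt, Fintype.card_coe, hS₂, Fin.card_Ici]
  have hsum := Submodule.finrank_sup_add_finrank_inf_eq s t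
  have hle : Module.finrank ℝ ↥(s ⊔ t) ≤ n := by
    simpa using Submodule.finrank_le (s ⊔ t)
  have hpos : 0 < Module.finrank ℝ ↥(s ⊓ t) := by
    have hin : (i : ℕ) < n := i.isLt
    omega
  have hnt : Nontrivial ↥(s ⊓ t) := Module.finrank_pos_iff.mp hpos
  obtain ⟨⟨x, hxst⟩, hxne⟩ := exists_ne (0 : ↥(s ⊓ t))
  have hx0 : x ≠ 0 := fun h => hxne (Subtype.ext h)
  have hxs : x ∈ s := hxst.1
  have hxt : x ∈ t := hxst.2
  obtain ⟨cw, hcw⟩ := (Submodule.mem_span_range_iff_exists_fun ℝ).mp hxs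
  obtain ⟨cv, hcv⟩ := (Submodule.mem_span_range_iff_exists_fun ℝ).mp hxt
  have hxx : (inner ℝ x x : ℝ) = ∑ j : S₁, cw j * cw j := by
    rw [← hcw]; exact quad w hw _ Subtype.val_injective cw cw
  have hxx' : (inner ℝ x x : ℝ) = ∑ j : S₂, cv j * cv j := by
    rw [← hcv]; exact quad v hv _ Subtype.val_injective cv cv
  have hAx : toE (A.mulVec x) = ∑ j : S₁, (a j * cw j) • w j := by
    conv_lhs => rw [← hcw]
    have h1 : A.mulVecLin (∑ j : S₁, cw j • w j) = ∑ j : S₁, cw j • A.mulVecLin (w j) := by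
      rw [map_sum]; simp_rw [map_smul]
    rw [WithLp.ofLp_sum]; simp_rw [WithLp.ofLp_smul]
    show toE (A.mulVecLin (∑ j : S₁, cw j • (w j).ofLp)) = _
    rw [h1]
    simp only [toE, WithLp.toLp_sum]
    refine Finset.sum_congr rfl fun j _ => ?_
    show WithLp.toLp 2 (cw j • A.mulVec (w j)) = _
    rw [hweig, smul_smul, mul_comm]
    rfl
  have hBx : toE (B.mulVec x) = ∑ j : S₂, (b j * cv j) • v j := by
    conv_lhs => rw [← hcv]
    have h1 : B.mulVecLin (∑ j : S₂, cv j • v j) = ∑ j : S₂, cv j • B.mulVecLin (v j) := by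
      rw [map_sum]; simp_rw [map_smul]
    rw [WithLp.ofLp_sum]; simp_rw [WithLp.ofLp_smul]
    show toE (B.mulVecLin (∑ j : S₂, cv j • (v j).ofLp)) = _
    rw [h1]
    simp only [toE, WithLp.toLp_sum]
    refine Finset.sum_congr rfl fun j _ => ?_
    show WithLp.toLp 2 (cv j • B.mulVec (v j)) = _
    rw [hveig, smul_smul, mul_comm]
    rfl
  have hxAx : (inner ℝ x (toE (A.mulVec x)) : ℝ) = ∑ j : S₁, cw j * (a j * cw j) := by
    rw [hAx]
    conv_lhs => rw [← hcw]
    exact quad w hw _ Subtype.val_injective cw _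
  have hxBx : (inner ℝ x (toE (B.mulVec x)) : ℝ) = ∑ j : S₂, cv j * (b j * cv j) := by
    rw [hBx]
    conv_lhs => rw [← hcv]
    exact quad v hv _ Subtype.val_injective cv _
  have hxxpos : (0:ℝ) < inner ℝ x x := by
    rcases lt_or_eq_of_le (real_inner_self_nonneg (x := x)) with h | h
    · exact h
    · exact absurd (inner_self_eq_zero.mp h.symm) hx0
  have h1 : a i * (inner ℝ x x : ℝ) ≤ (inner ℝ x (toE (A.mulVec x)) : ℝ) := by
    rw [hxAx, hxx, Finset.mul_sum]
    refine Finset.sum_le_sum fun j _ => ?_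
    have hji : a i ≤ a (j : Fin n) := ha (Finset.mem_Iic.mp j.2)
    nlinarith [mul_self_nonneg (cw j)]
  have h2 : (inner ℝ x (toE (B.mulVec x)) : ℝ) ≤ b i * (inner ℝ x x : ℝ) := by
    rw [hxBx, hxx', Finset.mul_sum]
    refine Finset.sum_le_sum fun j _ => ?_
    have hji : b (j : Fin n) ≤ b i := hb (Finset.mem_Ici.mp j.2)
    nlinarith [mul_self_nonneg (cv j)]
  have h3 : (inner ℝ x (toE (P.mulVec x)) : ℝ) ≤ c * (inner ℝ x x : ℝ) := by
    calc (inner ℝ x (toE (P.mulVec x)) : ℝ)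
        ≤ ‖x‖ * ‖toE (P.mulVec x)‖ := real_inner_le_norm _ _
      _ ≤ ‖x‖ * (c * ‖x‖) := mul_le_mul_of_nonneg_left (hc x) (norm_nonneg _)
      _ = c * (‖x‖ * ‖x‖) := by ring
      _ = c * (inner ℝ x x : ℝ) := by rw [← real_inner_self_eq_norm_mul_norm]
  have hsplit : (inner ℝ x (toE (A.mulVec x)) : ℝ)
      = (inner ℝ x (toE (B.mulVec x)) : ℝ) + (inner ℝ x (toE (P.mulVec x)) : ℝ) := by
    have hadd : toE (A.mulVec x) = toE (B.mulVec x) + toE (P.mulVec x) := by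
      rw [hAB, Matrix.add_mulVec]
      rfl
    rw [hadd, inner_add_right]
  have hfin : a i * (inner ℝ x x : ℝ) ≤ (b i + c) * (inner ℝ x x : ℝ) := by
    calc a i * (inner ℝ x x : ℝ) ≤ _ := h1
      _ = _ + _ := hsplit
      _ ≤ b i * (inner ℝ x x : ℝ) + c * (inner ℝ x x : ℝ) := add_le_add h2 h3
      _ = (b i + c) * (inner ℝ x x : ℝ) := by ring
  exact le_of_mul_le_mul_right hfin hxxpos

theorem stmt_15 (n : ℕ) (M N : Matrix (Fin n) (Fin n) ℝ)
    (hM : M.IsSymm) (hN : N.IsSymm)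
    (mu nu : Fin n → ℝ) (u w : Fin n → (Fin n → ℝ))
    (huorth : ∀ i j : Fin n, ip (u i) (u j) = if i = j then 1 else 0)
    (hworth : ∀ i j : Fin n, ip (w i) (w j) = if i = j then 1 else 0)
    (hueig : ∀ i, M.mulVec (u i) = mu i • u i)
    (hweig : ∀ i, (M + N).mulVec (w i) = nu i • w i)
    (hmu : Antitone mu) (hnu : Antitone nu)
    (c : ℝ) (hc : ∀ x : Fin n → ℝ, evnorm (N.mulVec x) ≤ c * evnorm x) :
    ∀ i : Fin n, |nu i - mu i| ≤ c := by
  intro i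
  have hu' : Orthonormal ℝ (fun j => toE (u j)) := by
    rw [orthonormal_iff_ite]
    intro j k
    rw [← ip_eq_inner]
    exact_mod_cast huorth j k
  have hw' : Orthonormal ℝ (fun j => toE (w j)) := by
    rw [orthonormal_iff_ite]
    intro j k
    rw [← ip_eq_inner]
    exact_mod_cast hworth j k
  have hcN : ∀ x : EuclideanSpace ℝ (Fin n), ‖toE (N.mulVec x)‖ ≤ c * ‖x‖ := by
    intro x
    have h := hc x
    rw [evnorm_eq_norm, evnorm_eq_norm] at h
    exact h
  have hcN' : ∀ x : EuclideanSpace ℝ (Fin n), ‖toE ((-N).mulVec x)‖ ≤ c * ‖x‖ := by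
    intro x
    have h : toE ((-N).mulVec x) = -(toE (N.mulVec x)) := by
      simp [toE, Matrix.neg_mulVec]
    rw [h, norm_neg]
    exact hcN x
  have h1 : nu i ≤ mu i + c :=
    weyl_key n (M + N) M N rfl nu mu (fun j => toE (u j)) (fun j => toE (w j))
      hu' hw' hueig hweig hnu hmu c hcN i
  have h2 : mu i ≤ nu i + c :=
    weyl_key n M (M + N) (-N) (by abel) mu nu (fun j => toE (w j)) (fun j => toE (u j))
      hw' hu' hweig hueig hmu hnu c hcN' i
  rw [abs_sub_le_iff]
  constructor <;> linarith
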